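/- Let ∇ be a lattice polytope. Two vertices v₁, v₂ of ∇ are neighbouring (they lie on a common edge with no intermediate lattice point) if and only if there is no lattice point m ∈ ∇ ∩ ℤ^d other than v₁ and v₂ with supp(m) ⊆ supp(v₁) ∪ supp(v₂). -/

import Mathlib

open BigOperators Pointwise

/-- two vertices of a lattice polytope are neighbouring (they span an
edge with no intermediate lattice point) iff no other lattice point has support
contained in the union of their supports. -/
theorem neighbouring_iff_no_lattice_point_in_support_union
    (d : ℕ) (F : Type) [Fintype F]
    (a : F → Fin d → ℤ) (c : F → ℤ)
    (P : Set (Fin d → ℝ)) (V : Finset (Fin d → ℤ))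
    (hlat : P = convexHull ℝ ((fun m : Fin d → ℤ => fun i => (m i : ℝ)) ''
      (V : Set (Fin d → ℤ))))
    (hfacet : P = {x : Fin d → ℝ | ∀ f : F, (c f : ℝ) ≤ ∑ i, x i * (a f i : ℝ)})
    (hprim : ∀ f : F, Finset.univ.gcd (a f) = 1)
    (v₁ v₂ : Fin d → ℤ) (hne : v₁ ≠ v₂)
    (hv₁ : (fun i => (v₁ i : ℝ)) ∈ Set.extremePoints ℝ P)
    (hv₂ : (fun i => (v₂ i : ℝ)) ∈ Set.extremePoints ℝ P) :
    -- `v₁` and `v₂` are neighbouring: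
    (IsExtreme ℝ P (segment ℝ (fun i => (v₁ i : ℝ)) (fun i => (v₂ i : ℝ))) ∧
      ¬ ∃ p : Fin d → ℤ,
        (fun i => (p i : ℝ)) ∈ openSegment ℝ (fun i => (v₁ i : ℝ)) (fun i => (v₂ i : ℝ)) ∧
        p ≠ v₁ ∧ p ≠ v₂)
    ↔
    ¬ ∃ p : Fin d → ℤ, (fun i => (p i : ℝ)) ∈ P ∧ p ≠ v₁ ∧ p ≠ v₂ ∧
      {f : F | (c f : ℝ) < ∑ i, (p i : ℝ) * (a f i : ℝ)}
        ⊆ {f : F | (c f : ℝ) < ∑ i, (v₁ i : ℝ) * (a f i : ℝ)}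
          ∪ {f : F | (c f : ℝ) < ∑ i, (v₂ i : ℝ) * (a f i : ℝ)} := by
  classical
  set ι : (Fin d → ℤ) → (Fin d → ℝ) := fun m => fun i => (m i : ℝ) with hι
  set L : F → (Fin d → ℝ) → ℝ := fun f x => ∑ i, x i * (a f i : ℝ) with hLdef
  -- linearity of L
  have hLraw : ∀ (f : F) (s t : ℝ) (x y : Fin d → ℝ),
      L f (fun i => s * x i + t * y i) = s * L f x + t * L f y := by
    intro f s t x y
    simp [hLdef, add_mul, Finset.sum_add_distrib, mul_assoc, ← Finset.mul_sum]
  have hL2 : ∀ (f : F) (t : ℝ) (x y : Fin d → ℝ),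
      L f (fun i => x i + t * (x i - y i)) = L f x + t * (L f x - L f y) := by
    intro f t x y
    simp [hLdef, add_mul, sub_mul, mul_sub, Finset.sum_add_distrib, Finset.sum_sub_distrib,
      mul_assoc, ← Finset.mul_sum]
  have hmem : ∀ x, x ∈ P ↔ ∀ f, (c f : ℝ) ≤ L f x := by
    intro x; rw [hfacet]; rfl
  have hPconv : Convex ℝ P := by
    rw [hlat]; exact convex_convexHull ℝ _
  have hPcomp : IsCompact P := by
    rw [hlat]; exact (V.finite_toSet.image _).isCompact_convexHull ℝ
  have hv₁P : ι v₁ ∈ P := hv₁.1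
  have hv₂P : ι v₂ ∈ P := hv₂.1
  -- the union of the supports
  set U : Set F := {f : F | (c f : ℝ) < L f (ι v₁)} ∪ {f : F | (c f : ℝ) < L f (ι v₂)}
    with hU
  have htight : ∀ f, f ∉ U → L f (ι v₁) = c f ∧ L f (ι v₂) = c f := by
    intro f hf
    simp only [hU, Set.mem_union, Set.mem_setOf_eq, not_or, not_lt] at hf
    exact ⟨le_antisymm hf.1 ((hmem _).1 hv₁P f), le_antisymm hf.2 ((hmem _).1 hv₂P f)⟩
  -- the face cut out by the facets outside U
  set G : Set (Fin d → ℝ) := P ∩ {x | ∀ f, f ∉ U → L f x = c f} with hG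
  have hGext : IsExtreme ℝ P G := by
    refine ⟨Set.inter_subset_left, ?_⟩
    rintro x₁ h₁ x₂ h₂ x ⟨hxP, hxeq⟩ ⟨s, t, hs, ht, hst, rfl⟩
    have key : ∀ f, f ∉ U → L f x₁ = c f ∧ L f x₂ = c f := by
      intro f hf
      have h1 : (c f : ℝ) ≤ L f x₁ := (hmem _).1 h₁ f
      have h2 : (c f : ℝ) ≤ L f x₂ := (hmem _).1 h₂ f
      have h3 : s * L f x₁ + t * L f x₂ = c f := by
        have := hxeq f hf
        rwa [show s • x₁ + t • x₂ = fun i => s * x₁ i + t * x₂ i from rfl, hLraw] at this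
      have k1 := mul_le_mul_of_nonneg_left h1 hs.le
      have k2 := mul_le_mul_of_nonneg_left h2 ht.le
      have hsc : s * (c f : ℝ) + t * (c f : ℝ) = c f := by
        linear_combination ((c f : ℝ)) * hst
      constructor
      · exact le_antisymm (le_of_mul_le_mul_left (by linarith) hs) h1
      · exact le_antisymm (le_of_mul_le_mul_left (by linarith) ht) h2
    exact ⟨h₁, fun f hf => (key f hf).1⟩
  have hsegG : segment ℝ (ι v₁) (ι v₂) ⊆ G := by
    rintro x ⟨s, t, hs, ht, hst, rfl⟩
    refine ⟨hPconv hv₁P hv₂P hs ht hst, fun f hf => ?_⟩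
    rw [show s • ι v₁ + t • ι v₂ = fun i => s * ι v₁ i + t * ι v₂ i from rfl, hLraw,
      (htight f hf).1, (htight f hf).2]
    ring_nf
    linear_combination (c f : ℝ) * hst
  have hιinj : ∀ m m' : Fin d → ℤ, ι m = ι m' → m = m' := by
    intro m m' h
    funext i
    have h' : ((m i : ℝ)) = (m' i : ℝ) := congrFun h i
    exact_mod_cast h'
  constructor
  · -- forward direction
    rintro ⟨hext, hnop⟩ ⟨p, hpP, hp1, hp2, hsupp⟩
    -- the midpoint of v₁ v₂
    set x : Fin d → ℝ := fun i => (1/2 : ℝ) * ι v₁ i + (1/2 : ℝ) * ι v₂ i with hx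
    have hxseg : x ∈ segment ℝ (ι v₁) (ι v₂) :=
      ⟨1/2, 1/2, by norm_num, by norm_num, by norm_num, rfl⟩
    have hxP : x ∈ P := hPconv.segment_subset hv₁P hv₂P hxseg
    have hxL : ∀ f, L f x = (1/2) * L f (ι v₁) + (1/2) * L f (ι v₂) := fun f => hLraw f _ _ _ _
    have hxU : ∀ f ∈ U, (c f : ℝ) < L f x := by
      intro f hf
      have h1 : (c f : ℝ) ≤ L f (ι v₁) := (hmem _).1 hv₁P f
      have h2 : (c f : ℝ) ≤ L f (ι v₂) := (hmem _).1 hv₂P f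
      rcases hf with hf | hf <;> (simp only [Set.mem_setOf_eq] at hf; rw [hxL f]; linarith)
    have hxeq : ∀ f, f ∉ U → L f x = c f ∧ L f (ι p) = c f := by
      intro f hf
      constructor
      · rw [hxL f, (htight f hf).1, (htight f hf).2]; ring
      · have hle : (c f : ℝ) ≤ L f (ι p) := (hmem _).1 hpP f
        have : f ∉ {f : F | (c f : ℝ) < L f (ι p)} := fun hc => hf (hsupp hc)
        simp only [Set.mem_setOf_eq, not_lt] at this
        linarith
    -- direction of perturbation
    set D : F → ℝ := fun f => L f x - L f (ι p) with hD
    have hDzero : ∀ f, f ∉ U → D f = 0 := by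
      intro f hf; simp [hD, (hxeq f hf).1, (hxeq f hf).2]
    -- choose ε
    have hkey : ∃ ε : ℝ, 0 < ε ∧ ∀ f, (c f : ℝ) ≤ L f x + ε * D f := by
      set B : Finset F := Finset.univ.filter (fun f => D f < 0) with hB
      have hBU : ∀ f ∈ B, (c f : ℝ) < L f x := by
        intro f hf
        simp only [hB, Finset.mem_filter] at hf
        refine hxU f ?_
        by_contra hfu
        exact absurd (hDzero f hfu) (ne_of_lt hf.2)
      by_cases hBne : B.Nonempty
      · refine ⟨min 1 (B.inf' hBne fun f => (L f x - c f) / (-D f)), ?_, ?_⟩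
        · refine lt_min one_pos ?_
          rw [Finset.lt_inf'_iff]
          intro f hf
          have h1 := hBU f hf
          have h2 : D f < 0 := by simpa [hB] using (Finset.mem_filter.1 hf).2
          exact div_pos (by linarith) (by linarith)
        · intro f
          by_cases hDf : D f < 0
          · have hfB : f ∈ B := by simp [hB, hDf]
            have hεle : min 1 (B.inf' hBne fun f => (L f x - c f) / (-D f))
                ≤ (L f x - c f) / (-D f) :=
              le_trans (min_le_right _ _) (Finset.inf'_le _ hfB)
            have hpos : (0:ℝ) < -D f := by linarith
            have := (le_div_iff₀ hpos).1 hεle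
            nlinarith [this]
          · push_neg at hDf
            have h1 : (c f : ℝ) ≤ L f x := (hmem _).1 hxP f
            have hεpos : (0:ℝ) < min 1 (B.inf' hBne fun f => (L f x - c f) / (-D f)) := by
              refine lt_min one_pos ?_
              rw [Finset.lt_inf'_iff]
              intro g hg
              have h1 := hBU g hg
              have h2 : D g < 0 := by simpa [hB] using (Finset.mem_filter.1 hg).2
              exact div_pos (by linarith) (by linarith)
            have := mul_nonneg hεpos.le hDf
            linarith
      · refine ⟨1, one_pos, fun f => ?_⟩
        have hDf : ¬ D f < 0 := by
          intro h
          exact hBne ⟨f, by simp [hB, h]⟩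
        push_neg at hDf
        have h1 : (c f : ℝ) ≤ L f x := (hmem _).1 hxP f
        linarith
    obtain ⟨ε, hε, hεc⟩ := hkey
    -- the perturbed point
    set x' : Fin d → ℝ := fun i => x i + ε * (x i - ι p i) with hx'
    have hx'P : x' ∈ P := by
      rw [hmem]
      intro f
      rw [hx', hL2]
      exact hεc f
    have hmemseg : x ∈ openSegment ℝ (ι p) x' := by
      refine ⟨ε / (1 + ε), 1 / (1 + ε), by positivity, by positivity, ?_, ?_⟩
      · field_simp
        ring
      · funext i
        simp only [Pi.add_apply, Pi.smul_apply, smul_eq_mul, hx']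
        field_simp
        ring
    have hpseg : ι p ∈ segment ℝ (ι v₁) (ι v₂) :=
      (hext.2 hpP hx'P hxseg hmemseg)
    have hp1' : ι p ≠ ι v₁ := fun h => hp1 (hιinj _ _ h)
    have hp2' : ι p ≠ ι v₂ := fun h => hp2 (hιinj _ _ h)
    have hpopen : ι p ∈ openSegment ℝ (ι v₁) (ι v₂) := by
      rw [← insert_endpoints_openSegment] at hpseg
      rcases hpseg with h | h | h
      · exact absurd h hp1'
      · exact absurd h hp2'
      · exact h
    exact hnop ⟨p, hpopen, hp1, hp2⟩
  · -- reverse direction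
    intro hno
    have hGclosed : IsClosed ({x : Fin d → ℝ | ∀ f, f ∉ U → L f x = c f}) := by
      have : {x : Fin d → ℝ | ∀ f, f ∉ U → L f x = c f}
          = ⋂ f ∈ {f : F | f ∉ U}, {x | L f x = c f} := by
        ext x; simp [Set.mem_iInter]
      rw [this]
      refine isClosed_biInter fun f _ => ?_
      have hcont : Continuous (L f) := by
        apply continuous_finset_sum
        intro i _
        exact (continuous_apply i).mul continuous_const
      exact isClosed_eq hcont continuous_const
    have hGcomp : IsCompact G := hPcomp.inter_right hGclosed
    have hGconv : Convex ℝ G := by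
      rintro y hy z hz s t hs ht hst
      refine ⟨hPconv hy.1 hz.1 hs ht hst, fun f hf => ?_⟩
      rw [show s • y + t • z = fun i => s * y i + t * z i from rfl, hLraw,
        hy.2 f hf, hz.2 f hf]
      linear_combination (c f : ℝ) * hst
    -- extreme points of G are v₁ or v₂
    have hGep : G.extremePoints ℝ ⊆ {ι v₁, ι v₂} := by
      intro y hy
      have hyG : y ∈ G := hy.1
      have hyP : y ∈ P.extremePoints ℝ := hGext.extremePoints_subset_extremePoints hy
      have hyV : y ∈ ι '' (V : Set (Fin d → ℤ)) := by
        rw [hlat] at hyP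
        exact extremePoints_convexHull_subset hyP
      obtain ⟨m, _, rfl⟩ := hyV
      by_contra hc
      simp only [Set.mem_insert_iff, Set.mem_singleton_iff, not_or] at hc
      refine hno ⟨m, hyG.1, fun h => hc.1 (by rw [h]), fun h => hc.2 (by rw [h]), ?_⟩
      intro f hf
      by_contra hfu
      have heq0 : L f (ι m) = c f := hyG.2 f hfu
      have hf' : (c f : ℝ) < L f (ι m) := hf
      rw [heq0] at hf'
      exact lt_irrefl _ hf'
    have hGseg : G ⊆ segment ℝ (ι v₁) (ι v₂) := by
      have hKM := closure_convexHull_extremePoints hGcomp hGconv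
      have h1 : convexHull ℝ (G.extremePoints ℝ) ⊆ segment ℝ (ι v₁) (ι v₂) := by
        rw [← convexHull_pair]
        exact convexHull_mono hGep
      have hclosed : IsClosed (segment ℝ (ι v₁) (ι v₂)) := by
        rw [← convexHull_pair]
        exact (Set.toFinite _).isClosed_convexHull ℝ
      calc G = closure (convexHull ℝ (G.extremePoints ℝ)) := hKM.symm
        _ ⊆ segment ℝ (ι v₁) (ι v₂) := closure_minimal h1 hclosed
    have hGeq : G = segment ℝ (ι v₁) (ι v₂) := le_antisymm hGseg hsegG
    constructor
    · rw [← hGeq]; exact hGext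
    · rintro ⟨p, hpo, hp1, hp2⟩
      have hpseg := openSegment_subset_segment ℝ _ _ hpo
      have hpP : ι p ∈ P := hPconv.segment_subset hv₁P hv₂P hpseg
      refine hno ⟨p, hpP, hp1, hp2, ?_⟩
      intro f hf
      simp only [Set.mem_setOf_eq] at hf
      obtain ⟨s, t, hs, ht, hst, heq⟩ := hpo
      by_contra hfu
      have h12 := htight f hfu
      have heq' : s • ι v₁ + t • ι v₂ = ι p := heq
      have hval : L f (ι p) = c f := by
        rw [← heq', show s • ι v₁ + t • ι v₂ = fun i => s * ι v₁ i + t * ι v₂ i from rfl,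
          hLraw, h12.1, h12.2]
        linear_combination (c f : ℝ) * hst
      have hf' : (c f : ℝ) < L f (ι p) := hf
      rw [hval] at hf'
      exact lt_irrefl _ hf'
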